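/- Machine termination for typed terms: if M is a closed term with ⊢ M : rev(σ⃗) ⟹ τ⃗ where σ⃗ = σ_1…σ_n, and S = ε·N_1·…·N_n is a stack of closed terms with ⊢ N_i : σ_i for each i, then the machine started at (S, M) terminates: there is a stack T with a run (S, M) ⇓ (T, *). -/

import Mathlib

/-- Terms of the sequential λ-calculus in de Bruijn representation
(so terms are automatically identified up to α-equivalence):
nil `*`, variable prefix `x.M`, push/application `[N].M`,
and pop/abstraction `<x>.M`. -/
inductive STm : Type
  | star : STm
  | var  : Nat → STm → STm
  | push : STm → STm → STm
  | pop  : STm → STm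

namespace STm

/-- Lifting of a renaming under a binder. -/
def liftF (f : Nat → Nat) : Nat → Nat
  | 0 => 0
  | n+1 => f n + 1

/-- Renaming of de Bruijn indices. -/
def rename (f : Nat → Nat) : STm → STm
  | star => star
  | var n M => var (f n) (rename f M)
  | push N M => push (rename f N) (rename f M)
  | pop M => pop (rename (liftF f) M)

/-- Capture-avoiding composition `N ; M`. -/
def comp : STm → STm → STm
  | star, P => P
  | var n N, P => var n (comp N P)
  | push Q N, P => push Q (comp N P)
  | pop N, P => pop (comp N (rename Nat.succ P))

/-- Lifting of a substitution under a binder. -/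
def liftS (σ : Nat → STm) : Nat → STm
  | 0 => var 0 star
  | n+1 => rename Nat.succ (σ n)

/-- Capture-avoiding simultaneous substitution; note
`{N/x}(x.M) = N ; {N/x}M`. -/
def subst (σ : Nat → STm) : STm → STm
  | star => star
  | var n M => comp (σ n) (subst σ M)
  | push N M => push (subst σ N) (subst σ M)
  | pop M => pop (subst (liftS σ) M)

/-- Capture-avoiding substitution `{N/x}M` of `N` for the variable bound
immediately outside `M`. -/
def subst1 (N : STm) : STm → STm :=
  subst (fun n => match n with | 0 => N | n+1 => var n star)

end STm

/-- Machine states: a stack of terms (written bottom-first, so the top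
element is the last element of the list) together with a term. -/
abbrev SState := List STm × STm

/-- The transitions of the sequential stack machine:
`(S, [N].M) → (S·N, M)` and `(S·N, <x>.M) → (S, {N/x}M)`. -/
inductive SMStep : SState → SState → Prop
  | push (S : List STm) (N M : STm) : SMStep (S, .push N M) (S ++ [N], M)
  | pop (S : List STm) (N M : STm) : SMStep (S ++ [N], .pop M) (S, STm.subst1 N M)

/-- A run of the sequential machine: a finite sequence of transitions. -/
def SRun : SState → SState → Prop := Relation.ReflTransGen SMStep

/-- Sequential types `ρ_n…ρ_1 ⟹ τ_1…τ_m`: an implication between two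
finite vectors of sequential types. The first list is the input vector
as written (i.e. `arr (rev ρ⃗) τ⃗` represents `rev(ρ⃗) ⟹ τ⃗`). -/
inductive STy : Type
  | arr : List STy → List STy → STy

/-- Typing judgments `Γ ⊢ M : τ` of the sequential λ-calculus, with the
context `Γ` a finite map from (de Bruijn) variables to types, given as a
list. -/
inductive Typing : List STy → STm → STy → Prop
  | star (Γ : List STy) (τs : List STy) :
      Typing Γ .star (.arr τs.reverse τs)
  | var (Γ : List STy) (n : Nat) (M : STm) (ρs σs τs υs : List STy) :
      Γ[n]? = some (.arr ρs.reverse σs) →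
      Typing Γ M (.arr (σs.reverse ++ τs.reverse) υs) →
      Typing Γ (.var n M) (.arr (ρs.reverse ++ τs.reverse) υs)
  | abs (Γ : List STy) (M : STm) (ρ : STy) (σs τs : List STy) :
      Typing (ρ :: Γ) M (.arr σs.reverse τs) →
      Typing Γ (.pop M) (.arr (ρ :: σs.reverse) τs)
  | app (Γ : List STy) (N M : STm) (ρ : STy) (σs τs : List STy) :
      Typing Γ N ρ →
      Typing Γ M (.arr (ρ :: σs.reverse) τs) →
      Typing Γ (.push N M) (.arr σs.reverse τs)

namespace STm

/-! ### Renaming and substitution lemmas -/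

theorem liftF_comp (f g : Nat → Nat) :
    (fun n => liftF g (liftF f n)) = liftF (fun n => g (f n)) := by
  funext n; cases n <;> rfl

theorem rename_rename (f g : Nat → Nat) (M : STm) :
    rename g (rename f M) = rename (fun n => g (f n)) M := by
  induction M generalizing f g with
  | star => rfl
  | var n M ih => simp [rename, ih]
  | push N M ihN ihM => simp [rename, ihN, ihM]
  | pop M ih => simp [rename, ih, liftF_comp]

theorem comp_rename (f : Nat → Nat) (A B : STm) :
    rename f (comp A B) = comp (rename f A) (rename f B) := by
  induction A generalizing f B with
  | star => rfl
  | var n A ih => simp [comp, rename, ih]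
  | push Q A ihQ ihA => simp [comp, rename, ihA]
  | pop A ih =>
    simp only [comp, rename, ih]
    rw [rename_rename, rename_rename]
    rfl

theorem comp_assoc (A B C : STm) :
    comp (comp A B) C = comp A (comp B C) := by
  induction A generalizing B C with
  | star => rfl
  | var n A ih => simp [comp, ih]
  | push Q A ihQ ihA => simp [comp, ihA]
  | pop A ih => simp [comp, ih, comp_rename]

@[simp] theorem comp_star (M : STm) : comp M star = M := by
  induction M with
  | star => rfl
  | var n M ih => simp [comp, ih]
  | push N M ihN ihM => simp [comp, ihM]
  | pop M ih => simpa [comp, rename] using ih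

theorem subst_rename (σ : Nat → STm) (f : Nat → Nat) (M : STm) :
    subst σ (rename f M) = subst (fun n => σ (f n)) M := by
  induction M generalizing σ f with
  | star => rfl
  | var n M ih => simp [rename, subst, ih]
  | push N M ihN ihM => simp [rename, subst, ihN, ihM]
  | pop M ih =>
    simp only [rename, subst, ih]
    have : (fun n => liftS σ (liftF f n)) = liftS (fun n => σ (f n)) := by
      funext n; cases n <;> rfl
    rw [this]

theorem rename_subst (f : Nat → Nat) (σ : Nat → STm) (M : STm) :
    rename f (subst σ M) = subst (fun n => rename f (σ n)) M := by
  induction M generalizing σ f with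
  | star => rfl
  | var n M ih => simp [subst, rename, comp_rename, ih]
  | push N M ihN ihM => simp [subst, rename, ihN, ihM]
  | pop M ih =>
    simp only [subst, rename, ih]
    have : (fun n => rename (liftF f) (liftS σ n)) = liftS (fun n => rename f (σ n)) := by
      funext n
      cases n with
      | zero => rfl
      | succ n =>
        show rename (liftF f) (rename Nat.succ (σ n)) = rename Nat.succ (rename f (σ n))
        rw [rename_rename, rename_rename]; rfl
    rw [this]

theorem liftS_rename_succ (σ : Nat → STm) (B : STm) :
    subst (liftS σ) (rename Nat.succ B) = rename Nat.succ (subst σ B) := by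
  rw [subst_rename, rename_subst]; rfl

theorem subst_comp (σ : Nat → STm) (A B : STm) :
    subst σ (comp A B) = comp (subst σ A) (subst σ B) := by
  induction A generalizing σ B with
  | star => rfl
  | var n A ih => simp [comp, subst, ih, comp_assoc]
  | push Q A ihQ ihA => simp [comp, subst, ihA]
  | pop A ih => simp [comp, subst, ih, liftS_rename_succ]

theorem subst_subst (τ σ : Nat → STm) (M : STm) :
    subst τ (subst σ M) = subst (fun n => subst τ (σ n)) M := by
  induction M generalizing σ τ with
  | star => rfl
  | var n M ih => simp [subst, subst_comp, ih]
  | push N M ihN ihM => simp [subst, ihN, ihM]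
  | pop M ih =>
    simp only [subst, ih]
    have : (fun n => subst (liftS τ) (liftS σ n)) = liftS (fun n => subst τ (σ n)) := by
      funext n
      cases n with
      | zero => rfl
      | succ n => exact liftS_rename_succ τ (σ n)
    rw [this]

/-- The identity substitution. -/
def idS : Nat → STm := fun n => var n star

@[simp] theorem liftS_idS : liftS idS = idS := by
  funext n; cases n <;> rfl

@[simp] theorem subst_idS (M : STm) : subst idS M = M := by
  induction M with
  | star => rfl
  | var n M ih => simp [subst, idS, comp, ih]
  | push N M ihN ihM => simp [subst, ihN, ihM]
  | pop M ih => simp [subst, ih]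

/-- Extension of a substitution by a term for variable `0`. -/
def consS (N : STm) (σ : Nat → STm) : Nat → STm
  | 0 => N
  | n+1 => σ n

theorem subst1_subst (N : STm) (σ : Nat → STm) (M : STm) :
    subst1 N (subst (liftS σ) M) = subst (consS N σ) M := by
  unfold subst1
  rw [subst_subst]
  congr 1
  funext n
  cases n with
  | zero => show comp N _ = N; simp [subst]
  | succ n =>
    show subst _ (rename Nat.succ (σ n)) = σ n
    rw [subst_rename]
    exact subst_idS (σ n)

/-! ### Closedness -/

/-- All free de Bruijn variables of `M` are `< k`. -/
def ClB : Nat → STm → Prop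
  | _, star => True
  | k, var n M => n < k ∧ ClB k M
  | k, push N M => ClB k N ∧ ClB k M
  | k, pop M => ClB (k+1) M

theorem rename_eq_of_ClB {k : Nat} {f : Nat → Nat} (hf : ∀ n < k, f n = n)
    {M : STm} (hM : ClB k M) : rename f M = M := by
  induction M generalizing k f with
  | star => rfl
  | var n M ih => exact congrArg₂ var (hf n hM.1) (ih hf hM.2)
  | push N M ihN ihM => exact congrArg₂ push (ihN hf hM.1) (ihM hf hM.2)
  | pop M ih =>
    refine congrArg pop (ih (k := k+1) ?_ hM)
    intro n hn
    cases n with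
    | zero => rfl
    | succ n => show f n + 1 = n + 1; rw [hf n (Nat.lt_of_succ_lt_succ hn)]

theorem rename_closed {f : Nat → Nat} {M : STm} (hM : ClB 0 M) :
    rename f M = M :=
  rename_eq_of_ClB (fun n hn => absurd hn (Nat.not_lt_zero n)) hM

theorem subst_eq_of_ClB {k : Nat} {σ : Nat → STm} (hσ : ∀ n < k, σ n = var n star)
    {M : STm} (hM : ClB k M) : subst σ M = M := by
  induction M generalizing k σ with
  | star => rfl
  | var n M ih =>
    show comp (σ n) (subst σ M) = var n M
    rw [hσ n hM.1, ih hσ hM.2]; rfl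
  | push N M ihN ihM => exact congrArg₂ push (ihN hσ hM.1) (ihM hσ hM.2)
  | pop M ih =>
    refine congrArg pop (ih (k := k+1) ?_ hM)
    intro n hn
    cases n with
    | zero => rfl
    | succ n =>
      show rename Nat.succ (σ n) = var (n+1) star
      rw [hσ n (Nat.lt_of_succ_lt_succ hn)]; rfl

theorem subst_closed {σ : Nat → STm} {M : STm} (hM : ClB 0 M) :
    subst σ M = M :=
  subst_eq_of_ClB (fun n hn => absurd hn (Nat.not_lt_zero n)) hM

theorem ClB_rename {k j : Nat} {f : Nat → Nat} (hf : ∀ n < k, f n < j)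
    {M : STm} (hM : ClB k M) : ClB j (rename f M) := by
  induction M generalizing k j f with
  | star => trivial
  | var n M ih => exact ⟨hf n hM.1, ih hf hM.2⟩
  | push N M ihN ihM => exact ⟨ihN hf hM.1, ihM hf hM.2⟩
  | pop M ih =>
    refine ih (k := k+1) (j := j+1) ?_ hM
    intro n hn
    cases n with
    | zero => exact Nat.succ_pos j
    | succ n => exact Nat.succ_lt_succ (hf n (Nat.lt_of_succ_lt_succ hn))

theorem ClB_comp {k : Nat} {A B : STm} (hA : ClB k A) (hB : ClB k B) :
    ClB k (comp A B) := by
  induction A generalizing k B with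
  | star => exact hB
  | var n A ih => exact ⟨hA.1, ih hA.2 hB⟩
  | push Q A ihQ ihA => exact ⟨hA.1, ihA hA.2 hB⟩
  | pop A ih =>
    exact ih hA (ClB_rename (fun n hn => Nat.succ_lt_succ hn) hB)

theorem ClB_subst {k j : Nat} {σ : Nat → STm} (hσ : ∀ n < k, ClB j (σ n))
    {M : STm} (hM : ClB k M) : ClB j (subst σ M) := by
  induction M generalizing k j σ with
  | star => trivial
  | var n M ih => exact ClB_comp (hσ n hM.1) (ih hσ hM.2)
  | push N M ihN ihM => exact ⟨ihN hσ hM.1, ihM hσ hM.2⟩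
  | pop M ih =>
    refine ih (k := k+1) (j := j+1) ?_ hM
    intro n hn
    cases n with
    | zero => exact ⟨Nat.succ_pos j, trivial⟩
    | succ n =>
      exact ClB_rename (fun m hm => Nat.succ_lt_succ hm)
        (hσ n (Nat.lt_of_succ_lt_succ hn))

end STm

theorem Typing.clB {Γ : List STy} {M : STm} {τ : STy} (h : Typing Γ M τ) :
    STm.ClB Γ.length M := by
  induction h with
  | star Γ τs => trivial
  | var Γ n M ρs σs τs υs hget hM ih =>
    exact ⟨List.getElem?_eq_some_iff.1 hget |>.choose, ih⟩
  | abs Γ M ρ σs τs hM ih => exact ih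
  | app Γ N M ρ σs τs hN hM ihN ihM => exact ⟨ihN, ihM⟩
/-! ### Machine lemmas -/

theorem SMStep.frame {s t : SState} (U : List STm) (h : SMStep s t) :
    SMStep (U ++ s.1, s.2) (U ++ t.1, t.2) := by
  cases h with
  | push S N M =>
    show SMStep (U ++ S, _) (U ++ (S ++ [N]), _)
    rw [← List.append_assoc]
    exact SMStep.push (U ++ S) N M
  | pop S N M =>
    show SMStep (U ++ (S ++ [N]), _) (U ++ S, _)
    rw [← List.append_assoc]
    exact SMStep.pop (U ++ S) N M

theorem SRun.frame {s t : SState} (U : List STm) (h : SRun s t) :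
    SRun (U ++ s.1, s.2) (U ++ t.1, t.2) := by
  induction h with
  | refl => exact Relation.ReflTransGen.refl
  | tail _ h₂ ih => exact ih.tail (h₂.frame U)

theorem SMStep.comp {s t : SState} {Q : STm} (hQ : STm.ClB 0 Q) (h : SMStep s t) :
    SMStep (s.1, STm.comp s.2 Q) (t.1, STm.comp t.2 Q) := by
  cases h with
  | push S N M => exact SMStep.push S N (STm.comp M Q)
  | pop S N M =>
    show SMStep (S ++ [N], STm.comp (STm.pop M) Q) (S, STm.comp (STm.subst1 N M) Q)
    have h1 : STm.comp (STm.pop M) Q = STm.pop (STm.comp M Q) := by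
      show STm.pop (STm.comp M (STm.rename Nat.succ Q)) = _
      rw [STm.rename_closed hQ]
    have h2 : STm.comp (STm.subst1 N M) Q = STm.subst1 N (STm.comp M Q) := by
      unfold STm.subst1
      rw [STm.subst_comp, STm.subst_closed hQ]
    rw [h1, h2]
    exact SMStep.pop S N (STm.comp M Q)

theorem SRun.comp {s t : SState} {Q : STm} (hQ : STm.ClB 0 Q) (h : SRun s t) :
    SRun (s.1, STm.comp s.2 Q) (t.1, STm.comp t.2 Q) := by
  induction h with
  | refl => exact Relation.ReflTransGen.refl
  | tail _ h₂ ih => exact ih.tail (h₂.comp hQ)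

/-! ### The logical relation -/

/-- The reducibility (logical) relation: a term is reducible at type
`rev(σ⃗) ⟹ τ⃗` if it is closed and, started on any stack of reducible
terms for `σ⃗`, the machine terminates at `*` with a stack of reducible
terms for `τ⃗`. -/
def Red : STy → STm → Prop
  | .arr is os, M => STm.ClB 0 M ∧ ∀ S : List STm,
      (is.length = S.length ∧ ∀ a b, (a, b) ∈ is.zip S.reverse → Red a b) →
      ∃ T : List STm, (os.length = T.length ∧ ∀ a b, (a, b) ∈ os.zip T → Red a b) ∧
        SRun (S, M) (T, .star)
termination_by τ _ => sizeOf τ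
decreasing_by
  · have h1 : a ∈ is := (List.of_mem_zip ‹(a, b) ∈ is.zip S.reverse›).1
    have := List.sizeOf_lt_of_mem h1
    simp only [STy.arr.sizeOf_spec]
    omega
  · have h1 : a ∈ os := (List.of_mem_zip ‹(a, b) ∈ os.zip T›).1
    have := List.sizeOf_lt_of_mem h1
    simp only [STy.arr.sizeOf_spec]
    omega

theorem zip_iff_forall₂ {α β : Type*} {R : α → β → Prop} {l : List α} {L : List β} :
    (l.length = L.length ∧ ∀ a b, (a, b) ∈ l.zip L → R a b) ↔ List.Forall₂ R l L := by
  rw [List.forall₂_iff_zip]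

theorem Red_iff (is os : List STy) (M : STm) :
    Red (.arr is os) M ↔ STm.ClB 0 M ∧ ∀ S : List STm,
      List.Forall₂ Red is S.reverse →
      ∃ T : List STm, List.Forall₂ Red os T ∧ SRun (S, M) (T, .star) := by
  rw [Red]
  refine and_congr_right fun _ => forall_congr' fun S => ?_
  rw [show is.length = S.length ↔ is.length = S.reverse.length by simp]
  rw [zip_iff_forall₂]
  refine imp_congr_right fun _ => exists_congr fun T => ?_
  rw [zip_iff_forall₂]

theorem Red.clB {τ : STy} {M : STm} (h : Red τ M) : STm.ClB 0 M := by
  cases τ with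
  | arr is os => exact ((Red_iff is os M).1 h).1
theorem forall₂_append_split {α β : Type*} {R : α → β → Prop} :
    ∀ {a c : List α} {L : List β}, List.Forall₂ R (a ++ c) L →
      ∃ A C : List β, L = A ++ C ∧ List.Forall₂ R a A ∧ List.Forall₂ R c C := by
  intro a
  induction a with
  | nil => exact fun h => ⟨[], _, rfl, List.Forall₂.nil, h⟩
  | cons x a ih =>
    intro c L h
    cases h with
    | cons hx h =>
      obtain ⟨A, C, rfl, hA, hC⟩ := ih h
      exact ⟨_ :: A, C, rfl, List.Forall₂.cons hx hA, hC⟩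

/-- Reducibility of a composition `P ; Q`. -/
theorem Red.comp {a b c d : List STy} {P Q : STm}
    (hP : Red (.arr a b) P) (hQ : Red (.arr (b.reverse ++ c) d) Q) :
    Red (.arr (a ++ c) d) (STm.comp P Q) := by
  rw [Red_iff] at hP hQ ⊢
  obtain ⟨hPc, hP⟩ := hP
  obtain ⟨hQc, hQ⟩ := hQ
  refine ⟨STm.ClB_comp hPc hQc, fun S hS => ?_⟩
  obtain ⟨A, C, hSrev, hA, hC⟩ := forall₂_append_split hS
  have hSeq : S = C.reverse ++ A.reverse := by
    rw [← List.reverse_append, ← hSrev, List.reverse_reverse]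
  obtain ⟨B, hB, hrunP⟩ := hP A.reverse (by rwa [List.reverse_reverse])
  obtain ⟨T, hT, hrunQ⟩ := hQ (C.reverse ++ B) (by
    rw [List.reverse_append, List.reverse_reverse]
    exact List.rel_append (List.rel_reverse hB) hC)
  refine ⟨T, hT, ?_⟩
  have h1 : SRun (S, P) (C.reverse ++ B, STm.star) := by
    rw [hSeq]; exact hrunP.frame C.reverse
  have h2 : SRun (S, STm.comp P Q) (C.reverse ++ B, STm.comp STm.star Q) :=
    h1.comp hQc
  exact Relation.ReflTransGen.trans h2 hrunQ

/-- The fundamental lemma of the logical relation. -/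
theorem Typing.red {Γ : List STy} {M : STm} {τ : STy} (h : Typing Γ M τ) :
    ∀ θ : Nat → STm, (∀ n ρ, Γ[n]? = some ρ → Red ρ (θ n)) →
      Red τ (STm.subst θ M) := by
  induction h with
  | star Γ τs =>
    intro θ hθ
    rw [show STm.subst θ STm.star = STm.star from rfl, Red_iff]
    refine ⟨trivial, fun S hS => ?_⟩
    refine ⟨S, ?_, Relation.ReflTransGen.refl⟩
    simpa using List.rel_reverse hS
  | var Γ n M ρs σs τs υs hget hM ih =>
    intro θ hθ
    show Red _ (STm.comp (θ n) (STm.subst θ M))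
    exact Red.comp (hθ n _ hget) (by simpa using ih θ hθ)
  | abs Γ M ρ σs τs hM ih =>
    intro θ hθ
    show Red _ (STm.pop (STm.subst (STm.liftS θ) M))
    rw [Red_iff]
    constructor
    · show STm.ClB 1 (STm.subst (STm.liftS θ) M)
      refine STm.ClB_subst (k := (ρ :: Γ).length) ?_ hM.clB
      intro n hn
      cases n with
      | zero => exact ⟨Nat.one_pos, trivial⟩
      | succ n =>
        have hρ : ∃ υ, Γ[n]? = some υ :=
          ⟨_, List.getElem?_eq_getElem (by simpa using Nat.lt_of_succ_lt_succ hn)⟩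
        obtain ⟨υ, hυ⟩ := hρ
        exact STm.ClB_rename (fun m hm => absurd hm (Nat.not_lt_zero m))
          ((hθ n υ hυ).clB)
    · intro S hS
      obtain ⟨N, L, hN, hL, hSrev⟩ := List.forall₂_cons_left_iff.1 hS
      have hSeq : S = L.reverse ++ [N] := by
        rw [← List.reverse_reverse S, hSrev, List.reverse_cons]
      have hstep : SMStep (S, STm.pop (STm.subst (STm.liftS θ) M))
          (L.reverse, STm.subst (STm.consS N θ) M) := by
        rw [hSeq, ← STm.subst1_subst]
        exact SMStep.pop L.reverse N _
      have hred : Red (.arr σs.reverse τs) (STm.subst (STm.consS N θ) M) := by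
        refine ih (STm.consS N θ) ?_
        intro n υ hn
        cases n with
        | zero => cases hn; exact hN
        | succ n => exact hθ n υ hn
      rw [Red_iff] at hred
      obtain ⟨T, hT, hrun⟩ := hred.2 L.reverse (by rwa [List.reverse_reverse])
      exact ⟨T, hT, Relation.ReflTransGen.head hstep hrun⟩
  | app Γ N M ρ σs τs hN hM ihN ihM =>
    intro θ hθ
    show Red _ (STm.push (STm.subst θ N) (STm.subst θ M))
    have hNred := ihN θ hθ
    have hMred := ihM θ hθ
    rw [Red_iff] at hMred ⊢
    refine ⟨⟨hNred.clB, hMred.1⟩, fun S hS => ?_⟩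
    have hstep : SMStep (S, STm.push (STm.subst θ N) (STm.subst θ M))
        (S ++ [STm.subst θ N], STm.subst θ M) := SMStep.push S _ _
    obtain ⟨T, hT, hrun⟩ := hMred.2 (S ++ [STm.subst θ N]) (by
      rw [List.reverse_append]
      exact List.Forall₂.cons hNred hS)
    exact ⟨T, hT, Relation.ReflTransGen.head hstep hrun⟩
/-- Machine termination for typed terms: if `⊢ M : rev(σ⃗) ⟹ τ⃗` for a closed
term `M`, and `S = ε·N_1·…·N_n` is a stack of closed terms with `⊢ N_i : σ_i`
for each `i`, then the machine started at `(S, M)` terminates: there is a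
stack `T` with a run `(S, M) ⇓ (T, *)`. -/
theorem seq_machine_termination (M : STm) (σs τs : List STy) (S : List STm)
    (hM : Typing [] M (.arr σs.reverse τs))
    (hS : List.Forall₂ (fun σ N => Typing [] N σ) σs S) :
    ∃ T : List STm, SRun (S, M) (T, .star) := by
  have idok : ∀ n ρ, ([] : List STy)[n]? = some ρ → Red ρ (STm.idS n) := by
    intro n ρ h; simp at h
  have hMred : Red (.arr σs.reverse τs) M := by
    have := hM.red STm.idS idok
    rwa [STm.subst_idS] at this
  rw [Red_iff] at hMred
  have hSred : List.Forall₂ Red σs S := by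
    refine hS.imp fun {σ N} h => ?_
    have := h.red STm.idS idok
    rwa [STm.subst_idS] at this
  obtain ⟨T, _, hrun⟩ := hMred.2 S (List.rel_reverse hSred)
  exact ⟨T, hrun⟩
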